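/- Let a > 0, C > 0, D ≥ 2 an integer, and let (Q_j)_{j≥0} be a sequence with Q_j ≥ 1 for all j, satisfying Q_{j-1} ≤ a + a√(Q_j) for all j ≥ 1 (where a ≥ 1), and Q_j ≤ C·j^(D-1) for all j ≥ 1. Then the sequence (Q_j) is bounded. -/

import Mathlib

theorem gp_recursive_polynomial_bounded (a C : ℝ) (ha0 : 0 < a) (ha : 1 ≤ a)
    (hC : 0 < C) (D : ℕ) (hD : 2 ≤ D) (Q : ℕ → ℝ)
    (hQ1 : ∀ j, 1 ≤ Q j)
    (hrec : ∀ j, 1 ≤ j → Q (j - 1) ≤ a + a * Real.sqrt (Q j))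
    (hpoly : ∀ j, 1 ≤ j → Q j ≤ C * (j : ℝ) ^ (D - 1)) :
    ∃ M : ℝ, ∀ j, Q j ≤ M := by
  have h2a : (1:ℝ) ≤ 2 * a := by linarith
  have h2a0 : (0:ℝ) < 2 * a := by linarith
  have hQ0 : ∀ j, 0 < Q j := fun j => lt_of_lt_of_le one_pos (hQ1 j)
  -- step: Q j ≤ 2a * (Q (j+1))^(1/2)
  have hstep : ∀ j, Q j ≤ 2 * a * (Q (j+1)) ^ ((1:ℝ)/2) := by
    intro j
    have h := hrec (j+1) (by omega)
    simp only [Nat.add_sub_cancel] at h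
    have hs : 1 ≤ Real.sqrt (Q (j+1)) := by
      rw [show (1:ℝ) = Real.sqrt 1 by simp]
      exact Real.sqrt_le_sqrt (hQ1 _)
    have : a + a * Real.sqrt (Q (j+1)) ≤ 2 * a * Real.sqrt (Q (j+1)) := by
      nlinarith
    calc Q j ≤ a + a * Real.sqrt (Q (j+1)) := h
      _ ≤ 2 * a * Real.sqrt (Q (j+1)) := this
      _ = 2 * a * (Q (j+1)) ^ ((1:ℝ)/2) := by
          rw [Real.sqrt_eq_rpow]
  -- key iterated inequality
  have key : ∀ k j, Q j ≤ (2*a) ^ (2 - 2 * ((1:ℝ)/2)^k) * (Q (j+k)) ^ (((1:ℝ)/2)^k) := by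
    intro k
    induction k with
    | zero => intro j; simp
    | succ k ih =>
      intro j
      set t : ℝ := ((1:ℝ)/2)^k with ht
      have ht0 : 0 < t := by positivity
      have h1 : Q j ≤ (2*a) ^ (2 - 2 * t) * (Q (j+k)) ^ t := ih j
      have h2 : Q (j+k) ≤ 2 * a * (Q (j+k+1)) ^ ((1:ℝ)/2) := hstep (j+k)
      have h3 : (Q (j+k)) ^ t ≤ (2 * a * (Q (j+k+1)) ^ ((1:ℝ)/2)) ^ t :=
        Real.rpow_le_rpow (hQ0 _).le h2 ht0.le
      have h4 : (2 * a * (Q (j+k+1)) ^ ((1:ℝ)/2)) ^ t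
          = (2*a) ^ t * (Q (j+k+1)) ^ (t/2) := by
        rw [Real.mul_rpow h2a0.le (Real.rpow_nonneg (hQ0 _).le _),
          ← Real.rpow_mul (hQ0 _).le]
        ring_nf
      have h5 : Q j ≤ (2*a) ^ (2 - 2 * t) * ((2*a) ^ t * (Q (j+k+1)) ^ (t/2)) := by
        calc Q j ≤ (2*a) ^ (2 - 2 * t) * (Q (j+k)) ^ t := h1
          _ ≤ (2*a) ^ (2 - 2 * t) * ((2*a) ^ t * (Q (j+k+1)) ^ (t/2)) := by
              rw [← h4]
              exact mul_le_mul_of_nonneg_left h3 (Real.rpow_nonneg h2a0.le _)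
      have heq : (2*a) ^ (2 - 2 * t) * (2*a) ^ t = (2*a) ^ (2 - 2 * (t/2)) := by
        rw [← Real.rpow_add h2a0]; ring_nf
      have hta : ((1:ℝ)/2)^(k+1) = t/2 := by rw [pow_succ]; ring
      rw [show j + (k+1) = j + k + 1 by ring, hta]
      calc Q j ≤ (2*a) ^ (2 - 2 * t) * ((2*a) ^ t * (Q (j+k+1)) ^ (t/2)) := h5
        _ = (2*a) ^ (2 - 2 * (t/2)) * (Q (j+k+1)) ^ (t/2) := by rw [← heq]; ring
  refine ⟨4 * a^2, fun j => ?_⟩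
  -- bound for each k ≥ 1
  have hbound : ∀ k, 1 ≤ k → Q j ≤ 4 * a^2 * (C * ((j+k : ℕ) : ℝ) ^ (D-1)) ^ (((1:ℝ)/2)^k) := by
    intro k hk
    have ht0 : (0:ℝ) < ((1:ℝ)/2)^k := by positivity
    have h1 := key k j
    have hexp : (2*a) ^ (2 - 2 * ((1:ℝ)/2)^k) ≤ (2*a) ^ (2:ℝ) := by
      apply Real.rpow_le_rpow_of_exponent_le h2a
      nlinarith
    have hsq : (2*a) ^ (2:ℝ) = 4 * a^2 := by
      rw [show (2:ℝ) = ((2:ℕ):ℝ) by norm_num, Real.rpow_natCast]; ring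
    have hQle : Q (j+k) ≤ C * ((j+k : ℕ) : ℝ) ^ (D-1) := hpoly (j+k) (by omega)
    have h2 : (Q (j+k)) ^ (((1:ℝ)/2)^k) ≤ (C * ((j+k : ℕ) : ℝ) ^ (D-1)) ^ (((1:ℝ)/2)^k) :=
      Real.rpow_le_rpow (hQ0 _).le hQle ht0.le
    calc Q j ≤ (2*a) ^ (2 - 2 * ((1:ℝ)/2)^k) * (Q (j+k)) ^ (((1:ℝ)/2)^k) := h1
      _ ≤ (2*a) ^ (2:ℝ) * (C * ((j+k : ℕ) : ℝ) ^ (D-1)) ^ (((1:ℝ)/2)^k) := by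
          apply mul_le_mul hexp h2 (Real.rpow_nonneg (hQ0 _).le _)
            (Real.rpow_nonneg h2a0.le _)
      _ = 4 * a^2 * (C * ((j+k : ℕ) : ℝ) ^ (D-1)) ^ (((1:ℝ)/2)^k) := by rw [hsq]
  -- limit argument
  have harg1 : ∀ k : ℕ, 1 ≤ k → (1:ℝ) ≤ C * ((j+k : ℕ) : ℝ) ^ (D-1) :=
    fun k hk => le_trans (hQ1 (j+k)) (hpoly (j+k) (by omega))
  -- the exponent term tends to 0
  have hlog : Filter.Tendsto
      (fun k : ℕ => ((1:ℝ)/2)^k * Real.log (C * ((j+k : ℕ) : ℝ) ^ (D-1)))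
      Filter.atTop (nhds 0) := by
    have hub : ∀ k : ℕ, 1 ≤ k →
        ((1:ℝ)/2)^k * Real.log (C * ((j+k : ℕ) : ℝ) ^ (D-1))
          ≤ (C + (D:ℝ)*j) * ((1:ℝ)/2)^k + (D:ℝ) * (k * ((1:ℝ)/2)^k) := by
      intro k hk
      have hx1 : (1:ℝ) ≤ C * ((j+k : ℕ) : ℝ) ^ (D-1) := harg1 k hk
      have hlogle : Real.log (C * ((j+k : ℕ) : ℝ) ^ (D-1))
          ≤ Real.log C + (D:ℝ) * (j + k) := by
        have hjk : (0:ℝ) < ((j+k : ℕ) : ℝ) := by positivity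
        rw [Real.log_mul hC.ne' (by positivity), Real.log_pow]
        have h1 : Real.log (((j+k : ℕ) : ℝ)) ≤ ((j:ℝ) + k) := by
          calc Real.log (((j+k : ℕ) : ℝ)) ≤ ((j+k : ℕ) : ℝ) := Real.log_le_self (by positivity)
            _ = (j:ℝ) + k := by push_cast; ring
        have h2 : ((D-1 : ℕ) : ℝ) ≤ (D:ℝ) := by
          have : (D-1 : ℕ) ≤ D := Nat.sub_le _ _
          exact_mod_cast this
        have hlognn : 0 ≤ Real.log (((j+k : ℕ) : ℝ)) := by
          apply Real.log_nonneg; exact_mod_cast Nat.one_le_iff_ne_zero.mpr (by omega)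
        nlinarith
      have hCle : Real.log C ≤ C := Real.log_le_self hC.le
      have hp : (0:ℝ) < ((1:ℝ)/2)^k := by positivity
      nlinarith
    have hlb : ∀ k : ℕ, 1 ≤ k →
        (0:ℝ) ≤ ((1:ℝ)/2)^k * Real.log (C * ((j+k : ℕ) : ℝ) ^ (D-1)) := by
      intro k hk
      have := Real.log_nonneg (harg1 k hk)
      positivity
    have hmaj : Filter.Tendsto
        (fun k : ℕ => (C + (D:ℝ)*j) * ((1:ℝ)/2)^k + (D:ℝ) * (k * ((1:ℝ)/2)^k))
        Filter.atTop (nhds 0) := by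
      have t1 : Filter.Tendsto (fun k : ℕ => ((1:ℝ)/2)^k) Filter.atTop (nhds 0) :=
        tendsto_pow_atTop_nhds_zero_of_lt_one (by norm_num) (by norm_num)
      have t2 : Filter.Tendsto (fun k : ℕ => (k:ℝ) * ((1:ℝ)/2)^k) Filter.atTop (nhds 0) :=
        tendsto_self_mul_const_pow_of_lt_one (by norm_num) (by norm_num)
      have := ((t1.const_mul (C + (D:ℝ)*j)).add (t2.const_mul (D:ℝ)))
      simpa using this
    apply squeeze_zero' (Filter.eventually_atTop.2 ⟨1, hlb⟩)
      (Filter.eventually_atTop.2 ⟨1, hub⟩) hmaj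
  have hlim : Filter.Tendsto
      (fun k : ℕ => 4 * a^2 * (C * ((j+k : ℕ) : ℝ) ^ (D-1)) ^ (((1:ℝ)/2)^k))
      Filter.atTop (nhds (4 * a^2)) := by
    have hexp : Filter.Tendsto
        (fun k : ℕ => Real.exp (((1:ℝ)/2)^k * Real.log (C * ((j+k : ℕ) : ℝ) ^ (D-1))))
        Filter.atTop (nhds 1) := by
      simpa [Function.comp_def] using (Real.continuous_exp.continuousAt.tendsto.comp hlog)
    have heqf : ∀ᶠ k : ℕ in Filter.atTop,
        4 * a^2 * Real.exp (((1:ℝ)/2)^k * Real.log (C * ((j+k : ℕ) : ℝ) ^ (D-1)))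
          = 4 * a^2 * (C * ((j+k : ℕ) : ℝ) ^ (D-1)) ^ (((1:ℝ)/2)^k) := by
      refine Filter.eventually_atTop.2 ⟨1, fun k hk => ?_⟩
      rw [Real.rpow_def_of_pos (lt_of_lt_of_le one_pos (harg1 k hk)), mul_comm (Real.log _)]
    have := (hexp.const_mul (4 * a^2)).congr' heqf
    simpa using this
  exact ge_of_tendsto hlim (Filter.eventually_atTop.2 ⟨1, hbound⟩)
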